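/- Every MWSR flow is a ratio-balanced maximum flow: if a feasible flow f minimizes ∑_{j∈A} e_j (r_j^f)² among all feasible flows, then f is a maximum flow and satisfies the ratio constraint. -/
import Mathlib

open Finset
open scoped Classical

set_option linter.unusedSectionVars false

variable {S A : Type*} [Fintype S] [Fintype A]

/-- A feasible flow: nonnegative on edges, zero off edges, outflow of each security
bounded by its value, inflow of each account bounded by its exposure. -/
def Feasible (E : Finset (S × A)) (v : S → ℝ) (e : A → ℝ) (f : S → A → ℝ) : Prop :=
  (∀ i j, (i, j) ∈ E → 0 ≤ f i j) ∧
  (∀ i j, (i, j) ∉ E → f i j = 0) ∧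
  (∀ i : S, ∑ j ∈ Finset.univ.filter (fun j => (i, j) ∈ E), f i j ≤ v i) ∧
  (∀ j : A, ∑ i ∈ Finset.univ.filter (fun i => (i, j) ∈ E), f i j ≤ e j)

/-- The value of a flow: total flow on all edges. -/
noncomputable def flowValue (E : Finset (S × A)) (f : S → A → ℝ) : ℝ :=
  ∑ p ∈ E, f p.1 p.2

/-- The risk ratio of account `j` under a flow `f`. -/
noncomputable def riskRatio (E : Finset (S × A)) (e : A → ℝ) (f : S → A → ℝ) (j : A) : ℝ :=
  (e j - ∑ i ∈ Finset.univ.filter (fun i => (i, j) ∈ E), f i j) / e j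

/-- A maximum flow: feasible, with value maximal among feasible flows. -/
def IsMaxFlow (E : Finset (S × A)) (v : S → ℝ) (e : A → ℝ) (f : S → A → ℝ) : Prop :=
  Feasible E v e f ∧ ∀ g : S → A → ℝ, Feasible E v e g → flowValue E g ≤ flowValue E f

/-- The ratio constraint: if `f` sends positive flow from `i` to `j` and `i` could
also be used for `l`, then the risk ratio of `j` is at least that of `l`. -/
def RatioConstraint (E : Finset (S × A)) (e : A → ℝ) (f : S → A → ℝ) : Prop :=
  ∀ i j l, (i, j) ∈ E → 0 < f i j → (i, l) ∈ E →
    riskRatio E e f l ≤ riskRatio E e f j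

/-- A ratio-balanced (maximum) flow. -/
def RatioBalanced (E : Finset (S × A)) (v : S → ℝ) (e : A → ℝ) (f : S → A → ℝ) : Prop :=
  IsMaxFlow E v e f ∧ RatioConstraint E e f

/-- The weighted sum of squared risk ratios `∑ j, e j * (r_j^f)^2`. -/
noncomputable def objective (E : Finset (S × A)) (e : A → ℝ) (f : S → A → ℝ) : ℝ :=
  ∑ j : A, e j * (riskRatio E e f j) ^ 2

/-- An MWSR flow: a feasible flow minimizing the weighted sum of squared risk
ratios among all feasible flows. -/
def MWSR (E : Finset (S × A)) (v : S → ℝ) (e : A → ℝ) (f : S → A → ℝ) : Prop :=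
  Feasible E v e f ∧ ∀ g : S → A → ℝ, Feasible E v e g → objective E e f ≤ objective E e g

/-! ### Auxiliary definitions -/

noncomputable def inflow (E : Finset (S × A)) (f : S → A → ℝ) (j : A) : ℝ :=
  ∑ i ∈ Finset.univ.filter (fun i => (i, j) ∈ E), f i j

noncomputable def outflow (E : Finset (S × A)) (f : S → A → ℝ) (i : S) : ℝ :=
  ∑ j ∈ Finset.univ.filter (fun j => (i, j) ∈ E), f i j

theorem riskRatio_def (E : Finset (S × A)) (e : A → ℝ) (f : S → A → ℝ) (j : A) :
    riskRatio E e f j = (e j - inflow E f j) / e j := rfl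

theorem inflow_add_single (E : Finset (S × A)) (f : S → A → ℝ) (i : S) (j : A) (δ : ℝ)
    (hij : (i, j) ∈ E) (l : A) :
    inflow E (fun a b => f a b + if (a, b) = (i, j) then δ else 0) l
      = inflow E f l + if l = j then δ else 0 := by
  unfold inflow
  rw [Finset.sum_add_distrib]
  congr 1
  by_cases hl : l = j
  · subst hl
    rw [if_pos rfl]
    have h1 : ∑ a ∈ univ.filter (fun a => (a, l) ∈ E), (if ((a : S), l) = (i, l) then δ else 0)
        = ∑ a ∈ univ.filter (fun a => (a, l) ∈ E), (if a = i then δ else 0) := by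
      apply Finset.sum_congr rfl; intro a _; simp [Prod.ext_iff]
    rw [h1, Finset.sum_ite_eq', if_pos (by simp [hij])]
  · rw [if_neg hl]
    apply Finset.sum_eq_zero
    intro a _
    rw [if_neg]
    intro h
    exact hl (congrArg Prod.snd h)

theorem outflow_add_single (E : Finset (S × A)) (f : S → A → ℝ) (i : S) (j : A) (δ : ℝ)
    (hij : (i, j) ∈ E) (a : S) :
    outflow E (fun a b => f a b + if (a, b) = (i, j) then δ else 0) a
      = outflow E f a + if a = i then δ else 0 := by
  unfold outflow
  rw [Finset.sum_add_distrib]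
  congr 1
  by_cases ha : a = i
  · subst ha
    rw [if_pos rfl]
    have h1 : ∑ b ∈ univ.filter (fun b => (a, b) ∈ E), (if ((a : S), b) = (a, j) then δ else 0)
        = ∑ b ∈ univ.filter (fun b => (a, b) ∈ E), (if b = j then δ else 0) := by
      apply Finset.sum_congr rfl; intro b _; simp [Prod.ext_iff]
    rw [h1, Finset.sum_ite_eq', if_pos (by simp [hij])]
  · rw [if_neg ha]
    apply Finset.sum_eq_zero
    intro b _
    rw [if_neg]
    intro h
    exact ha (congrArg Prod.fst h)

theorem sum_E_inflow (E : Finset (S × A)) (g : S → A → ℝ) (P : A → Prop) :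
    ∑ p ∈ E.filter (fun p => P p.2), g p.1 p.2
      = ∑ j ∈ univ.filter P, inflow E g j := by
  rw [Finset.sum_finset_product_right (E.filter (fun p => P p.2)) (univ.filter P)
    (fun j => univ.filter (fun i => (i, j) ∈ E)) (by intro p; simp [and_comm])]
  rfl

theorem sum_E_outflow (E : Finset (S × A)) (g : S → A → ℝ) (P : S → Prop) :
    ∑ p ∈ E.filter (fun p => P p.1), g p.1 p.2
      = ∑ i ∈ univ.filter P, outflow E g i := by
  rw [Finset.sum_finset_product (E.filter (fun p => P p.1)) (univ.filter P)
    (fun i => univ.filter (fun j => (i, j) ∈ E)) (by intro p; simp [and_comm])]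
  rfl

/-- Residual reachability: account `j` is reachable from a security with spare value. -/
inductive Reach (E : Finset (S × A)) (v : S → ℝ) (f : S → A → ℝ) : A → Prop
  | base (i : S) (j : A) : outflow E f i < v i → (i, j) ∈ E → Reach E v f j
  | step (i : S) (j j' : A) : Reach E v f j → 0 < f i j → (i, j') ∈ E → Reach E v f j'

/-- Along a residual path to a reachable account `j`, one can push a small amount of
extra flow into `j` without changing any other account's inflow. -/
theorem push (E : Finset (S × A)) (v : S → ℝ) (e : A → ℝ) (f : S → A → ℝ)
    (hf : Feasible E v e f) {j : A} (hj : Reach E v f j) :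
    ∃ K : ℝ, 0 ≤ K ∧ ∀ ε : ℝ, 0 < ε → ∃ δ : ℝ, 0 < δ ∧ δ ≤ ε ∧ ∃ g : S → A → ℝ,
      (∀ a b, (a, b) ∈ E → 0 ≤ g a b) ∧
      (∀ a b, (a, b) ∉ E → g a b = 0) ∧
      (∀ a : S, outflow E g a ≤ v a) ∧
      (∀ l : A, l ≠ j → inflow E g l = inflow E f l) ∧
      inflow E g j = inflow E f j + δ ∧
      (∀ a b, |g a b - f a b| ≤ K * δ) := by
  obtain ⟨hf0, hfE, hfv, hfe⟩ := hf
  induction hj with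
  | base i j hi hij =>
    refine ⟨1, zero_le_one, fun ε hε => ?_⟩
    have hδpos : (0:ℝ) < min ε (v i - outflow E f i) := lt_min hε (by linarith)
    set δ := min ε (v i - outflow E f i) with hδdef
    refine ⟨δ, hδpos, min_le_left _ _,
      fun a b => f a b + if (a, b) = (i, j) then δ else 0, ?_, ?_, ?_, ?_, ?_, ?_⟩
    · intro a b hab
      have := hf0 a b hab
      show 0 ≤ f a b + if (a, b) = (i, j) then δ else 0
      split_ifs <;> linarith
    · intro a b hab
      show (f a b + if (a, b) = (i, j) then δ else 0) = 0
      rw [if_neg (fun h => hab (by rw [h]; exact hij)), hfE a b hab, add_zero]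
    · intro a
      rw [outflow_add_single E f i j δ hij a]
      split_ifs with h
      · subst h
        have : δ ≤ v a - outflow E f a := min_le_right _ _
        linarith
      · rw [add_zero]; exact hfv a
    · intro l hl
      rw [inflow_add_single E f i j δ hij l, if_neg hl, add_zero]
    · rw [inflow_add_single E f i j δ hij j, if_pos rfl]
    · intro a b
      simp only [add_sub_cancel_left]
      rw [one_mul]
      split_ifs
      · rw [abs_of_nonneg hδpos.le]
      · simpa using hδpos.le
  | step i j j' hR hpos hij' ih =>
    obtain ⟨K, hK, hIH⟩ := ih
    have hij : (i, j) ∈ E := by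
      by_contra h
      have := hfE i j h
      linarith
    refine ⟨K + 1, by linarith, fun ε hε => ?_⟩
    have hden : (0:ℝ) < K + 1 := by linarith
    have hε' : 0 < min ε (f i j / (K + 1)) := lt_min hε (div_pos hpos hden)
    obtain ⟨δ, hδ0, hδle, g, hg0, hgE, hgv, hgl, hgj, hgb⟩ := hIH _ hε'
    have hδε : δ ≤ ε := hδle.trans (min_le_left _ _)
    have hδf : δ * K + δ ≤ f i j := by
      have h1 : δ ≤ f i j / (K + 1) := hδle.trans (min_le_right _ _)
      have h2 : δ * (K + 1) ≤ f i j := (le_div_iff₀ hden).mp h1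
      linarith
    set g1 : S → A → ℝ := fun a b => g a b + if (a, b) = (i, j) then -δ else 0 with hg1
    set g2 : S → A → ℝ := fun a b => g1 a b + if (a, b) = (i, j') then δ else 0 with hg2
    have hin1 : ∀ l, inflow E g1 l = inflow E g l + if l = j then -δ else 0 :=
      inflow_add_single E g i j (-δ) hij
    have hin2 : ∀ l, inflow E g2 l = inflow E g1 l + if l = j' then δ else 0 :=
      inflow_add_single E g1 i j' δ hij'
    have hout1 : ∀ a, outflow E g1 a = outflow E g a + if a = i then -δ else 0 :=
      outflow_add_single E g i j (-δ) hij
    have hout2 : ∀ a, outflow E g2 a = outflow E g1 a + if a = i then δ else 0 :=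
      outflow_add_single E g1 i j' δ hij'
    refine ⟨δ, hδ0, hδε, g2, ?_, ?_, ?_, ?_, ?_, ?_⟩
    · intro a b hab
      have hb := abs_le.mp (hgb a b)
      have hgnn := hg0 a b hab
      simp only [hg2, hg1]
      split_ifs with h1 h2 h2
      · linarith
      · rw [Prod.ext_iff] at h1
        obtain ⟨rfl, rfl⟩ := h1
        linarith [hb.1]
      · linarith
      · linarith
    · intro a b hab
      have h1 : (a, b) ≠ (i, j) := fun h => hab (by rw [h]; exact hij)
      have h2 : (a, b) ≠ (i, j') := fun h => hab (by rw [h]; exact hij')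
      simp only [hg2, hg1, if_neg h1, if_neg h2, hgE a b hab, add_zero]
    · intro a
      rw [hout2, hout1]
      split_ifs with h
      · linarith [hgv a]
      · linarith [hgv a]
    · intro l hl
      rw [hin2 l, hin1 l, if_neg hl]
      by_cases hlj : l = j
      · subst hlj
        rw [if_pos rfl, hgj]
        ring
      · rw [if_neg hlj, hgl l hlj]
        ring
    · rw [hin2 j', hin1 j', if_pos rfl]
      by_cases hjj : j' = j
      · subst hjj
        rw [if_pos rfl, hgj]
        ring
      · rw [if_neg hjj, hgl j' hjj]
        ring
    · intro a b
      have hb := abs_le.mp (hgb a b)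
      simp only [hg2, hg1]
      split_ifs <;> (rw [abs_le]; constructor <;> linarith [hδ0.le, hb.1, hb.2])

theorem sq_term_lt {c x y : ℝ} (hc : 0 < c) (hx : 0 ≤ x) (hxy : x < y) :
    c * (x / c) ^ 2 < c * (y / c) ^ 2 := by
  rw [div_pow, div_pow, ← mul_div_assoc, ← mul_div_assoc]
  rw [div_lt_div_iff₀ (by positivity) (by positivity)]
  nlinarith [mul_pos (mul_pos hc hc) hc, mul_pos (sub_pos.mpr hxy) (by linarith : (0:ℝ) < y + x)]

/-- In an MWSR flow, every reachable account is saturated. -/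
theorem reach_full (E : Finset (S × A)) (v : S → ℝ) (e : A → ℝ) (he : ∀ j, 0 < e j)
    (f : S → A → ℝ) (hf : MWSR E v e f) {j : A} (hj : Reach E v f j) :
    inflow E f j = e j := by
  by_contra hne
  have hle : ∀ l, inflow E f l ≤ e l := hf.1.2.2.2
  have hlt : inflow E f j < e j := lt_of_le_of_ne (hle j) hne
  obtain ⟨K, hK, hp⟩ := push E v e f hf.1 hj
  obtain ⟨δ, hδ0, hδle, g, hg0, hgE, hgv, hgl, hgj, -⟩ :=
    hp (e j - inflow E f j) (by linarith)
  have hgfeas : Feasible E v e g := by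
    refine ⟨hg0, hgE, hgv, fun l => ?_⟩
    show inflow E g l ≤ e l
    by_cases hl : l = j
    · subst hl; rw [hgj]; linarith
    · rw [hgl l hl]; exact hle l
  have hobj := hf.2 g hgfeas
  have hterm : e j * (riskRatio E e g j) ^ 2 < e j * (riskRatio E e f j) ^ 2 := by
    rw [riskRatio_def, riskRatio_def, hgj]
    exact sq_term_lt (he j) (by linarith) (by linarith)
  have hstrict : objective E e g < objective E e f := by
    unfold objective
    apply Finset.sum_lt_sum
    · intro l _
      by_cases hl : l = j
      · subst hl; exact hterm.le
      · rw [riskRatio_def, riskRatio_def, hgl l hl]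
    · exact ⟨j, mem_univ j, hterm⟩
  linarith

/-- An MWSR flow is a maximum flow. -/
theorem mwsr_isMaxFlow (E : Finset (S × A)) (v : S → ℝ) (e : A → ℝ) (he : ∀ j, 0 < e j)
    (f : S → A → ℝ) (hf : MWSR E v e f) : IsMaxFlow E v e f := by
  refine ⟨hf.1, fun g hg => ?_⟩
  set RS : S → Prop := fun i => outflow E f i < v i ∨ ∃ j, Reach E v f j ∧ 0 < f i j with hRS
  have hA1 : ∀ i jj, (i, jj) ∈ E → RS i → Reach E v f jj := by
    intro i jj hij h
    rcases h with h | ⟨j0, hR0, hpos⟩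
    · exact Reach.base i jj h hij
    · exact Reach.step i j0 jj hR0 hpos hij
  have hA2 : ∀ i, ¬ RS i → outflow E f i = v i := by
    intro i h
    have h1 : ¬ outflow E f i < v i := fun hc => h (Or.inl hc)
    exact le_antisymm (hf.1.2.2.1 i) (not_lt.mp h1)
  have hA4 : ∀ i jj, ¬ RS i → Reach E v f jj → f i jj = 0 := by
    intro i jj h hjj
    by_cases hij : (i, jj) ∈ E
    · by_contra hne
      have hpos : 0 < f i jj := lt_of_le_of_ne (hf.1.1 i jj hij) (Ne.symm hne)
      exact h (Or.inr ⟨jj, hjj, hpos⟩)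
    · exact hf.1.2.1 i jj hij
  have h1f : ∑ p ∈ E.filter (fun p => Reach E v f p.2), f p.1 p.2
      = ∑ jj ∈ univ.filter (Reach E v f), e jj := by
    rw [sum_E_inflow]
    exact Finset.sum_congr rfl (fun jj hjj => reach_full E v e he f hf (mem_filter.mp hjj).2)
  have h2f : ∑ p ∈ E.filter (fun p => ¬ Reach E v f p.2), f p.1 p.2
      = ∑ i ∈ univ.filter (fun i => ¬ RS i), v i := by
    have step1 : ∑ p ∈ E.filter (fun p => ¬ Reach E v f p.2), f p.1 p.2
        = ∑ p ∈ E.filter (fun p => ¬ RS p.1), f p.1 p.2 := by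
      rw [Finset.sum_filter, Finset.sum_filter]
      apply Finset.sum_congr rfl
      intro p hp
      by_cases h1 : Reach E v f p.2 <;> by_cases h2 : RS p.1
      · rw [if_neg (not_not_intro h1), if_neg (not_not_intro h2)]
      · rw [if_neg (not_not_intro h1), if_pos h2, hA4 p.1 p.2 h2 h1]
      · exact absurd (hA1 p.1 p.2 (by simpa using hp) h2) h1
      · rw [if_pos h1, if_pos h2]
    rw [step1]
    have hout := sum_E_outflow E f (fun i => ¬ RS i)
    have : ∑ p ∈ E.filter (fun p => ¬ RS p.1), f p.1 p.2
        = ∑ i ∈ univ.filter (fun i => ¬ RS i), outflow E f i := by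
      convert hout using 2 <;> congr
    rw [this]
    exact Finset.sum_congr rfl (fun i hi => hA2 i (mem_filter.mp hi).2)
  have hvalf : flowValue E f = ∑ jj ∈ univ.filter (Reach E v f), e jj
      + ∑ i ∈ univ.filter (fun i => ¬ RS i), v i := by
    rw [← h1f, ← h2f]
    exact (Finset.sum_filter_add_sum_filter_not E _ _).symm
  have h1g : ∑ p ∈ E.filter (fun p => Reach E v f p.2), g p.1 p.2
      ≤ ∑ jj ∈ univ.filter (Reach E v f), e jj := by
    rw [sum_E_inflow]
    exact Finset.sum_le_sum (fun jj _ => hg.2.2.2 jj)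
  have h2g : ∑ p ∈ E.filter (fun p => ¬ Reach E v f p.2), g p.1 p.2
      ≤ ∑ i ∈ univ.filter (fun i => ¬ RS i), v i := by
    have hsub : E.filter (fun p => ¬ Reach E v f p.2) ⊆ E.filter (fun p => ¬ RS p.1) := by
      intro p hp
      rw [mem_filter] at hp ⊢
      exact ⟨hp.1, fun h => hp.2 (hA1 p.1 p.2 (by simpa using hp.1) h)⟩
    calc ∑ p ∈ E.filter (fun p => ¬ Reach E v f p.2), g p.1 p.2
        ≤ ∑ p ∈ E.filter (fun p => ¬ RS p.1), g p.1 p.2 := by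
          apply Finset.sum_le_sum_of_subset_of_nonneg hsub
          intro p hp _
          exact hg.1 p.1 p.2 (by simpa using (mem_filter.mp hp).1)
      _ = ∑ i ∈ univ.filter (fun i => ¬ RS i), outflow E g i := by
          convert sum_E_outflow E g (fun i => ¬ RS i) using 2 <;> congr
      _ ≤ ∑ i ∈ univ.filter (fun i => ¬ RS i), v i :=
          Finset.sum_le_sum (fun i _ => hg.2.2.1 i)
  calc flowValue E g
      = ∑ p ∈ E.filter (fun p => Reach E v f p.2), g p.1 p.2
        + ∑ p ∈ E.filter (fun p => ¬ Reach E v f p.2), g p.1 p.2 :=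
        (Finset.sum_filter_add_sum_filter_not E _ _).symm
    _ ≤ ∑ jj ∈ univ.filter (Reach E v f), e jj
        + ∑ i ∈ univ.filter (fun i => ¬ RS i), v i := add_le_add h1g h2g
    _ = flowValue E f := hvalf.symm

/-- An MWSR flow satisfies the ratio constraint. -/
theorem mwsr_ratioConstraint (E : Finset (S × A)) (v : S → ℝ) (e : A → ℝ)
    (he : ∀ j, 0 < e j) (f : S → A → ℝ) (hf : MWSR E v e f) :
    RatioConstraint E e f := by
  intro i j l hij hpos hil
  by_contra hcon
  push_neg at hcon
  have hjl : j ≠ l := fun h => by rw [h] at hcon; exact lt_irrefl _ hcon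
  obtain ⟨⟨hf0, hfE, hfv, hfe⟩, hmin⟩ := hf
  have hFle : ∀ m, inflow E f m ≤ e m := hfe
  have hfv' : ∀ p, outflow E f p ≤ v p := hfv
  have hrj : 0 ≤ riskRatio E e f j := by
    rw [riskRatio_def]
    exact div_nonneg (by linarith [hFle j]) (he j).le
  have hrl : 0 < riskRatio E e f l := lt_of_le_of_lt hrj hcon
  have hFl : inflow E f l < e l := by
    have h2 := mul_pos hrl (he l)
    rw [riskRatio_def, div_mul_cancel₀ _ (he l).ne'] at h2
    linarith
  have hab : (e j - inflow E f j) * e l < (e l - inflow E f l) * e j := by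
    have h := hcon
    rw [riskRatio_def, riskRatio_def] at h
    exact (div_lt_div_iff₀ (he j) (he l)).mp h
  have hee : (0:ℝ) < e j + e l := by linarith [he j, he l]
  have hδ0pos : 0 < ((e l - inflow E f l) * e j - (e j - inflow E f j) * e l) / (e j + e l) :=
    div_pos (by linarith) hee
  set δ0 := ((e l - inflow E f l) * e j - (e j - inflow E f j) * e l) / (e j + e l) with hδ0def
  set δ := min (min (f i j) (e l - inflow E f l)) δ0 with hδdef
  have hδpos : 0 < δ := lt_min (lt_min hpos (by linarith)) hδ0pos
  have hδf : δ ≤ f i j := (min_le_left _ _).trans (min_le_left _ _)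
  have hδb : δ ≤ e l - inflow E f l := (min_le_left _ _).trans (min_le_right _ _)
  have hδδ0 : δ ≤ δ0 := min_le_right _ _
  have hδee : δ * (e j + e l) ≤ (e l - inflow E f l) * e j - (e j - inflow E f j) * e l :=
    (le_div_iff₀ hee).mp hδδ0
  set g1 : S → A → ℝ := fun p q => f p q + if (p, q) = (i, j) then -δ else 0 with hg1
  set g2 : S → A → ℝ := fun p q => g1 p q + if (p, q) = (i, l) then δ else 0 with hg2
  have hin1 : ∀ m, inflow E g1 m = inflow E f m + if m = j then -δ else 0 :=
    inflow_add_single E f i j (-δ) hij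
  have hin2 : ∀ m, inflow E g2 m = inflow E g1 m + if m = l then δ else 0 :=
    inflow_add_single E g1 i l δ hil
  have hout1 : ∀ p, outflow E g1 p = outflow E f p + if p = i then -δ else 0 :=
    outflow_add_single E f i j (-δ) hij
  have hout2 : ∀ p, outflow E g2 p = outflow E g1 p + if p = i then δ else 0 :=
    outflow_add_single E g1 i l δ hil
  have hinj : inflow E g2 j = inflow E f j - δ := by
    rw [hin2, hin1, if_pos rfl, if_neg hjl]; ring
  have hinl : inflow E g2 l = inflow E f l + δ := by
    rw [hin2, hin1, if_pos rfl, if_neg (Ne.symm hjl)]; ring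
  have hinm : ∀ m, m ≠ j → m ≠ l → inflow E g2 m = inflow E f m := by
    intro m h1 h2
    rw [hin2, hin1, if_neg h1, if_neg h2]; ring
  have hfeas : Feasible E v e g2 := by
    refine ⟨?_, ?_, ?_, ?_⟩
    · intro p q hpq
      have h0 := hf0 p q hpq
      simp only [hg2, hg1]
      split_ifs with h1 h2 h2
      · exact absurd (congrArg Prod.snd (h1.symm.trans h2)) hjl
      · rw [Prod.ext_iff] at h1
        obtain ⟨rfl, rfl⟩ := h1
        linarith
      · linarith
      · linarith
    · intro p q hpq
      have h1 : (p, q) ≠ (i, j) := fun h => hpq (by rw [h]; exact hij)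
      have h2 : (p, q) ≠ (i, l) := fun h => hpq (by rw [h]; exact hil)
      simp only [hg2, hg1, if_neg h1, if_neg h2, hfE p q hpq, add_zero]
    · intro p
      show outflow E g2 p ≤ v p
      rw [hout2, hout1]
      split_ifs with h
      · linarith [hfv' p]
      · linarith [hfv' p]
    · intro m
      show inflow E g2 m ≤ e m
      by_cases h1 : m = j
      · subst h1; rw [hinj]; linarith [hFle m]
      · by_cases h2 : m = l
        · subst h2; rw [hinl]; linarith
        · rw [hinm m h1 h2]; exact hFle m
  have hdiff : objective E e g2 - objective E e f
      = (e j * (riskRatio E e g2 j) ^ 2 - e j * (riskRatio E e f j) ^ 2)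
        + (e l * (riskRatio E e g2 l) ^ 2 - e l * (riskRatio E e f l) ^ 2) := by
    unfold objective
    rw [← Finset.sum_sub_distrib]
    have hre : ∑ m : A, (e m * (riskRatio E e g2 m) ^ 2 - e m * (riskRatio E e f m) ^ 2)
        = ∑ m ∈ ({j, l} : Finset A),
            (e m * (riskRatio E e g2 m) ^ 2 - e m * (riskRatio E e f m) ^ 2) := by
      symm
      apply Finset.sum_subset (Finset.subset_univ _)
      intro m _ hm
      simp only [Finset.mem_insert, Finset.mem_singleton] at hm
      push_neg at hm
      rw [riskRatio_def E e g2 m, riskRatio_def E e f m, hinm m hm.1 hm.2]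
      ring
    rw [hre, Finset.sum_pair hjl]
  rw [riskRatio_def E e g2 j, riskRatio_def E e f j, riskRatio_def E e g2 l,
    riskRatio_def E e f l, hinj, hinl] at hdiff
  have hDj : e j * ((e j - (inflow E f j - δ)) / e j) ^ 2
      - e j * ((e j - inflow E f j) / e j) ^ 2
      = (2 * (e j - inflow E f j) * δ + δ ^ 2) / e j := by
    field_simp [(he j).ne']
    ring
  have hDl : e l * ((e l - (inflow E f l + δ)) / e l) ^ 2
      - e l * ((e l - inflow E f l) / e l) ^ 2
      = (-2 * (e l - inflow E f l) * δ + δ ^ 2) / e l := by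
    field_simp [(he l).ne']
    ring
  rw [hDj, hDl] at hdiff
  have hneg : (2 * (e j - inflow E f j) * δ + δ ^ 2) / e j
      + (-2 * (e l - inflow E f l) * δ + δ ^ 2) / e l < 0 := by
    rw [div_add_div _ _ (he j).ne' (he l).ne', div_neg_iff]
    refine Or.inr ⟨?_, mul_pos (he j) (he l)⟩
    nlinarith [mul_le_mul_of_nonneg_left hδee hδpos.le,
      mul_pos hδpos (sub_pos.mpr hab)]
  have hobj : objective E e g2 < objective E e f := by linarith
  exact absurd (hmin g2 hfeas) (not_le.mpr hobj)

/-- Every MWSR flow is a ratio-balanced maximum flow. -/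
theorem mwsr_ratioBalanced (E : Finset (S × A)) (v : S → ℝ) (e : A → ℝ)
    (hv : ∀ i, 0 ≤ v i) (he : ∀ j, 0 < e j)
    (f : S → A → ℝ) (hf : MWSR E v e f) :
    RatioBalanced E v e f :=
  ⟨mwsr_isMaxFlow E v e he f hf, mwsr_ratioConstraint E v e he f hf⟩
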